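/- If n is prime, then for every k with 1 ≤ k ≤ n-1, the polynomial P_{n,k}(x) = ∑_{j=0}^{k} C(n, j) x^j is irreducible over ℚ. -/

import Mathlib

open Polynomial

private lemma not_sq_dvd_choose {n k : ℕ} (hn : n.Prime) (hk : 1 ≤ k) (hkn : k ≤ n - 1) :
    ¬ (n ^ 2 ∣ n.choose k) := by
  intro h
  have hn2 := hn.two_le
  have hkn' : k < n := by omega
  have hid : n * (n - 1).choose (k - 1) = n.choose k * k := by
    have := Nat.add_one_mul_choose_eq (n - 1) (k - 1)
    have h1 : n - 1 + 1 = n := by omega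
    have h2 : k - 1 + 1 = k := by omega
    rw [h1, h2] at this
    exact this
  have hdvd : n ∣ (n - 1).choose (k - 1) := by
    obtain ⟨m, hm⟩ := h
    have heq : n * (n - 1).choose (k - 1) = n * (n * m * k) := by
      rw [hid, hm]; ring
    exact ⟨m * k, by rw [Nat.eq_of_mul_eq_mul_left hn.pos heq]; ring⟩
  have hfac : (n - 1).choose (k - 1) * Nat.factorial (k-1) * Nat.factorial ((n-1)-(k-1)) = Nat.factorial (n-1) :=
    Nat.choose_mul_factorial_mul_factorial (by omega)
  have : n ∣ Nat.factorial (n-1) := by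
    rw [← hfac]; exact (hdvd.mul_right _).mul_right _
  have := (Nat.Prime.dvd_factorial hn).mp this
  omega

open Polynomial in
theorem irreducible_truncated_binomial_of_prime (n : ℕ) (hn : n.Prime) (k : ℕ) (hk : 1 ≤ k)
    (hkn : k ≤ n - 1) :
    Irreducible (∑ j ∈ Finset.range (k + 1), C ((n.choose j : ℚ)) * X ^ j) := by
  have hn2 := hn.two_le
  set P : ℤ[X] := ∑ j ∈ Finset.range (k + 1), C ((n.choose j : ℤ)) * X ^ j with hP
  have hcoeff : ∀ i, P.coeff i = if i ≤ k then (n.choose i : ℤ) else 0 := by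
    intro i
    simp only [hP, finset_sum_coeff, coeff_C_mul, coeff_X_pow, mul_ite, mul_one, mul_zero,
      Finset.sum_ite_eq, Finset.mem_range, Nat.lt_succ_iff]
  have hchoosek : (n.choose k : ℤ) ≠ 0 := by
    exact_mod_cast (Nat.choose_pos (by omega : k ≤ n)).ne'
  have hdegP : P.natDegree = k := by
    apply le_antisymm
    · rw [natDegree_le_iff_coeff_eq_zero]
      intro m hm
      rw [hcoeff]; rw [if_neg (by omega)]
    · exact le_natDegree_of_ne_zero (by rw [hcoeff, if_pos le_rfl]; exact hchoosek)
  have hcoeffR : ∀ i, P.reverse.coeff i = if i ≤ k then (n.choose (k - i) : ℤ) else 0 := by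
    intro i
    rw [coeff_reverse, hdegP]
    by_cases hik : i ≤ k
    · rw [revAt_le hik, hcoeff, if_pos (Nat.sub_le _ _), if_pos hik]
    · rw [revAt_eq_self_of_lt (by omega), hcoeff, if_neg (by omega), if_neg hik]
  have hdegR : P.reverse.natDegree = k := by
    apply le_antisymm
    · rw [natDegree_le_iff_coeff_eq_zero]
      intro m hm
      rw [hcoeffR, if_neg (by omega)]
    · exact le_natDegree_of_ne_zero (by rw [hcoeffR, if_pos le_rfl]; simp)
  have hmonicR : P.reverse.Monic := by
    unfold Polynomial.Monic Polynomial.leadingCoeff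
    rw [hdegR, hcoeffR, if_pos le_rfl]; simp
  have hEis : P.reverse.IsEisensteinAt (Ideal.span {(n : ℤ)}) := by
    constructor
    · rw [hmonicR.leadingCoeff, Ideal.mem_span_singleton]
      intro hdvd
      have := Int.le_of_dvd one_pos hdvd
      have : (2 : ℤ) ≤ (n : ℤ) := by exact_mod_cast hn2
      omega
    · intro i hi
      rw [hdegR] at hi
      rw [hcoeffR, if_pos (by omega), Ideal.mem_span_singleton]
      exact_mod_cast Int.natCast_dvd_natCast.mpr
        (hn.dvd_choose_self (by omega) (by omega))
    · rw [hcoeffR, if_pos (by omega), Nat.sub_zero, Ideal.span_singleton_pow,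
        Ideal.mem_span_singleton]
      intro hdvd
      exact not_sq_dvd_choose hn hk hkn (by exact_mod_cast hdvd)
  have hRirr : Irreducible P.reverse :=
    hEis.irreducible (Ideal.span_singleton_prime (by exact_mod_cast hn.pos.ne' : (n:ℤ) ≠ 0)
      |>.mpr (Nat.prime_iff_prime_int.mp hn)) hmonicR.isPrimitive (by omega)
  have hP0 : P.coeff 0 = 1 := by rw [hcoeff, if_pos (by omega)]; simp
  have key : ∀ c : ℤ[X], IsUnit (c.coeff 0) → IsUnit c.reverse → IsUnit c := by
    intro c h0 hu
    have hc0 : c.coeff 0 ≠ 0 := h0.ne_zero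
    have hdc : c.natDegree = 0 := by
      have h1 : c.reverse.natDegree = 0 := natDegree_eq_zero_of_isUnit hu
      have h2 : c.reverse.coeff c.natDegree ≠ 0 := by
        rw [coeff_reverse, revAt_le le_rfl, Nat.sub_self]; exact hc0
      have := le_natDegree_of_ne_zero h2
      omega
    rw [eq_C_of_natDegree_eq_zero hdc]
    exact isUnit_C.mpr h0
  have hPirr : Irreducible P := by
    constructor
    · intro hu
      have := natDegree_eq_zero_of_isUnit hu
      omega
    · intro a b hab
      have hab0 : a.coeff 0 * b.coeff 0 = 1 := by
        rw [← mul_coeff_zero, ← hab, hP0]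
      have hua : IsUnit (a.coeff 0) := IsUnit.of_mul_eq_one _ hab0
      have hub : IsUnit (b.coeff 0) := IsUnit.of_mul_eq_one _ (by rw [mul_comm]; exact hab0)
      have hrev : P.reverse = a.reverse * b.reverse := by
        rw [hab, reverse_mul_of_domain]
      rcases hRirr.isUnit_or_isUnit hrev with h | h
      · exact Or.inl (key a hua h)
      · exact Or.inr (key b hub h)
  have hprim : P.IsPrimitive := by
    intro r hr
    have := (C_dvd_iff_dvd_coeff r P).mp hr 0
    rw [hP0] at this
    exact isUnit_of_dvd_one this
  have hmap : P.map (Int.castRingHom ℚ) =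
      ∑ j ∈ Finset.range (k + 1), C ((n.choose j : ℚ)) * X ^ j := by
    rw [hP, Polynomial.map_sum]
    refine Finset.sum_congr rfl fun j _ => ?_
    rw [Polynomial.map_mul, Polynomial.map_pow, map_C, map_X]
    norm_num
  rw [← hmap]
  exact (Polynomial.IsPrimitive.Int.irreducible_iff_irreducible_map_cast hprim).mp hPirr
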